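/- Under the DINA model with true m×k Q-matrix Q and true parameters c, g ∈ [0,1]^m assumed known, suppose Q is complete, c ≇ g, and the attribute distribution p is diversified. For each sample size N let Q̂_N be any measurable choice of a minimizer of Q' ↦ S_{c,g}(Q') over all m×k binary matrices Q'. Then P(Q̂_N ∼ Q) → 1 as N → ∞. Moreover, there is a measurable choice of a column permutation of Q̂_N under which P(Q̂_N = Q) → 1, and for any such choice, any measurable choice p̂_N of a minimizer of p' ↦ |T_{c,g}(Q̂_N) p' − α_N| over probability vectors p' on {0,1}^k satisfies P(|p̂_N − p| > ε) → 0 for every ε > 0. -/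

import Mathlib

open MeasureTheory ProbabilityTheory Matrix Finset Filter

namespace QMatrix

variable {m k : ℕ}

/-- DINA capability indicator. -/
def xiDINA (Q : Fin m → Fin k → Bool) (i : Fin m) (A : Fin k → Bool) : ℝ :=
  if ∀ j, Q i j = true → A j = true then 1 else 0

/-- DINO capability indicator. -/
def xiDINO (Q : Fin m → Fin k → Bool) (i : Fin m) (A : Fin k → Bool) : ℝ :=
  if ∃ j, Q i j = true ∧ A j = true then 1 else 0

/-- Positive response probability under DINA. -/
noncomputable def piDINA (c g : Fin m → ℝ) (Q : Fin m → Fin k → Bool)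
    (i : Fin m) (A : Fin k → Bool) : ℝ :=
  (c i - g i) * xiDINA Q i A + g i

/-- Positive response probability under DINO. -/
noncomputable def piDINO (c g : Fin m → ℝ) (Q : Fin m → Fin k → Bool)
    (i : Fin m) (A : Fin k → Bool) : ℝ :=
  (c i - g i) * xiDINO Q i A + g i

/-- Entry of the saturated T-matrix for the row indexed by `S` and column indexed by `A`. -/
noncomputable def Tent (c g : Fin m → ℝ) (Q : Fin m → Fin k → Bool)
    (S : Finset (Fin m)) (A : Fin k → Bool) : ℝ :=
  ∏ i ∈ S, piDINA c g Q i A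

/-- Entry of the saturated U-matrix for the row indexed by `S` and column indexed by `A`. -/
noncomputable def Uent (c g : Fin m → ℝ) (Q : Fin m → Fin k → Bool)
    (S : Finset (Fin m)) (A : Fin k → Bool) : ℝ :=
  1 - ∏ i ∈ S, (1 - piDINO c g Q i A)

/-- The saturated T-matrix, rows indexed by nonempty subsets of items. -/
noncomputable def Tmat (c g : Fin m → ℝ) (Q : Fin m → Fin k → Bool) :
    Matrix {S : Finset (Fin m) // S.Nonempty} (Fin k → Bool) ℝ :=
  fun S A => Tent c g Q S.1 A

/-- The saturated U-matrix, rows indexed by nonempty subsets of items. -/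
noncomputable def Umat (c g : Fin m → ℝ) (Q : Fin m → Fin k → Bool) :
    Matrix {S : Finset (Fin m) // S.Nonempty} (Fin k → Bool) ℝ :=
  fun S A => Uent c g Q S.1 A

/-- The augmented T-matrix `T̃` (the row indexed by `∅` is the all-ones row). -/
noncomputable def Ttilde (c g : Fin m → ℝ) (Q : Fin m → Fin k → Bool) :
    Matrix (Finset (Fin m)) (Fin k → Bool) ℝ :=
  fun S A => Tent c g Q S A

/-- The augmented U-matrix `Ũ` (the row indexed by `∅` is the all-ones row). -/
noncomputable def Utilde (c g : Fin m → ℝ) (Q : Fin m → Fin k → Bool) :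
    Matrix (Finset (Fin m)) (Fin k → Bool) ℝ :=
  fun S A => if S.Nonempty then Uent c g Q S A else 1

/-- A Q-matrix is complete if each standard basis vector appears among its rows. -/
def Complete (Q : Fin m → Fin k → Bool) : Prop :=
  ∀ j : Fin k, ∃ i : Fin m, ∀ j' : Fin k, Q i j' = decide (j' = j)

/-- `QEquiv Q Q'` : `Q'` is obtained from `Q` by permuting columns (`Q ∼ Q'`). -/
def QEquiv (Q Q' : Fin m → Fin k → Bool) : Prop :=
  ∃ σ : Equiv.Perm (Fin k), ∀ i j, Q' i j = Q i (σ j)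

/-- `c ≇ g` : all coordinates differ. -/
def Ncong (c g : Fin m → ℝ) : Prop := ∀ i, c i ≠ g i

/-- Probability vector on attribute profiles. -/
def ProbVec (p : (Fin k → Bool) → ℝ) : Prop :=
  (∀ A, 0 ≤ p A) ∧ ∑ A, p A = 1

/-- Euclidean norm of a finitely indexed vector. -/
noncomputable def eNorm {ι : Type*} [Fintype ι] (v : ι → ℝ) : ℝ :=
  Real.sqrt (∑ i, v i ^ 2)

/-- pmf of one draw `(A, R)` under the DINA model. -/
noncomputable def dinaPMF (c g : Fin m → ℝ) (Q : Fin m → Fin k → Bool)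
    (p : (Fin k → Bool) → ℝ) (a : Fin k → Bool) (r : Fin m → Bool) : ℝ :=
  p a * ∏ i, (if r i then piDINA c g Q i a else 1 - piDINA c g Q i a)

/-- pmf of one draw `(A, R)` under the DINO model. -/
noncomputable def dinoPMF (c g : Fin m → ℝ) (Q : Fin m → Fin k → Bool)
    (p : (Fin k → Bool) → ℝ) (a : Fin k → Bool) (r : Fin m → Bool) : ℝ :=
  p a * ∏ i, (if r i then piDINO c g Q i a else 1 - piDINO c g Q i a)

/-- The empirical vector `α_N` computed from responses `R 0, …, R (N-1)`. -/
noncomputable def alphaVec (R : ℕ → (Fin m → Bool)) (N : ℕ) :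
    {S : Finset (Fin m) // S.Nonempty} → ℝ :=
  fun S => (∑ r ∈ Finset.range N, ∏ i ∈ S.1, (if R r i then (1:ℝ) else 0)) / N

/-- The empirical vector `β_N` computed from responses `R 0, …, R (N-1)`. -/
noncomputable def betaVec (R : ℕ → (Fin m → Bool)) (N : ℕ) :
    {S : Finset (Fin m) // S.Nonempty} → ℝ :=
  fun S => (∑ r ∈ Finset.range N, (if ∃ i ∈ S.1, R r i = true then (1:ℝ) else 0)) / N

/-- Objective `S_{c,g}(Q') = inf_{p'} |T_{c,g}(Q') p' - α|`. -/
noncomputable def Sobj (c g : Fin m → ℝ) (Q' : Fin m → Fin k → Bool)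
    (α : {S : Finset (Fin m) // S.Nonempty} → ℝ) : ℝ :=
  sInf {x | ∃ p', ProbVec p' ∧ x = eNorm (Tmat c g Q' *ᵥ p' - α)}

/-- Objective `V_{c,g}(Q') = inf_{p'} |U_{c,g}(Q') p' - β|`. -/
noncomputable def Vobj (c g : Fin m → ℝ) (Q' : Fin m → Fin k → Bool)
    (β : {S : Finset (Fin m) // S.Nonempty} → ℝ) : ℝ :=
  sInf {x | ∃ p', ProbVec p' ∧ x = eNorm (Umat c g Q' *ᵥ p' - β)}



/-! ### Auxiliary material for the proof -/

section ENormLemmas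
variable {ι : Type*} [Fintype ι]

lemma eNorm_eq_norm (v : ι → ℝ) :
    eNorm v = ‖(WithLp.equiv 2 (ι → ℝ)).symm v‖ := by
  rw [EuclideanSpace.norm_eq]
  unfold eNorm
  congr 1
  refine Finset.sum_congr rfl fun i _ => ?_
  rw [Real.norm_eq_abs, sq_abs]
  rfl

lemma eNorm_nonneg (v : ι → ℝ) : 0 ≤ eNorm v := Real.sqrt_nonneg _

lemma eNorm_zero : eNorm (0 : ι → ℝ) = 0 := by
  simp [eNorm]

lemma eNorm_eq_zero {v : ι → ℝ} (h : eNorm v = 0) : v = 0 := by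
  rw [eNorm_eq_norm] at h
  have := norm_eq_zero.mp h
  have h2 : (WithLp.equiv 2 (ι → ℝ)) ((WithLp.equiv 2 (ι → ℝ)).symm v)
      = (WithLp.equiv 2 (ι → ℝ)) 0 := by rw [this]
  simpa using h2

lemma eNorm_sub_comm (u v : ι → ℝ) : eNorm (u - v) = eNorm (v - u) := by
  unfold eNorm; congr 1; refine Finset.sum_congr rfl fun i _ => ?_
  have : (u - v) i = -((v - u) i) := by simp [Pi.sub_apply]
  rw [this, neg_pow]; ring

lemma eNorm_sub_le (u v w : ι → ℝ) : eNorm (u - w) ≤ eNorm (u - v) + eNorm (v - w) := by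
  rw [eNorm_eq_norm, eNorm_eq_norm, eNorm_eq_norm]
  have h : (WithLp.equiv 2 (ι → ℝ)).symm (u - w) =
      (WithLp.equiv 2 (ι → ℝ)).symm (u - v) + (WithLp.equiv 2 (ι → ℝ)).symm (v - w) := by
    have : u - w = (u - v) + (v - w) := by ring
    rw [this]; rfl
  rw [h]; exact norm_add_le _ _

lemma continuous_eNorm : Continuous (eNorm : (ι → ℝ) → ℝ) := by
  unfold eNorm
  exact Real.continuous_sqrt.comp (continuous_finset_sum _ fun i _ => (continuous_apply i).pow 2)

end ENormLemmas

/-- combined row (OR of rows in S) -/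
def rowOr (Q : Fin m → Fin k → Bool) (S : Finset (Fin m)) : Fin k → Bool :=
  fun j => decide (∃ i ∈ S, Q i j = true)

/-- survival function of a weight vector -/
noncomputable def FF (p : (Fin k → Bool) → ℝ) (v : Fin k → Bool) : ℝ :=
  ∑ A, (if ∀ j, v j = true → A j = true then (1:ℝ) else 0) * p A

def indF {k : ℕ} (J : Finset (Fin k)) : Fin k → Bool := fun j => decide (j ∈ J)

lemma prod_xiDINA (Q : Fin m → Fin k → Bool) (S : Finset (Fin m)) (A : Fin k → Bool) :
    ∏ i ∈ S, xiDINA Q i A = if ∀ j, rowOr Q S j = true → A j = true then (1:ℝ) else 0 := by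
  unfold xiDINA
  rw [Finset.prod_boole]
  congr 1
  simp only [eq_iff_iff, rowOr, decide_eq_true_eq]
  constructor
  · rintro h j ⟨i, hiS, hQ⟩; exact h i hiS j hQ
  · intro h i hiS j hQ; exact h j ⟨i, hiS, hQ⟩

lemma Tsum_expand (c g : Fin m → ℝ) (Q : Fin m → Fin k → Bool)
    (p : (Fin k → Bool) → ℝ) (S : Finset (Fin m)) :
    ∑ A, Tent c g Q S A * p A
      = ∑ t ∈ S.powerset, ((∏ i ∈ t, (c i - g i)) * ∏ i ∈ S \ t, g i) * FF p (rowOr Q t) := by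
  have hT : ∀ A, Tent c g Q S A =
      ∑ t ∈ S.powerset, ((∏ i ∈ t, (c i - g i)) * ∏ i ∈ S \ t, g i) *
        (if ∀ j, rowOr Q t j = true → A j = true then (1:ℝ) else 0) := by
    intro A
    unfold Tent piDINA
    rw [Finset.prod_add]
    refine Finset.sum_congr rfl fun t _ => ?_
    rw [Finset.prod_mul_distrib, ← prod_xiDINA]
    ring
  calc ∑ A, Tent c g Q S A * p A
      = ∑ A, ∑ t ∈ S.powerset, ((∏ i ∈ t, (c i - g i)) * ∏ i ∈ S \ t, g i) *
          ((if ∀ j, rowOr Q t j = true → A j = true then (1:ℝ) else 0) * p A) := by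
        refine Finset.sum_congr rfl fun A _ => ?_
        rw [hT A, Finset.sum_mul]
        refine Finset.sum_congr rfl fun t _ => by ring
    _ = _ := by
        rw [Finset.sum_comm]
        refine Finset.sum_congr rfl fun t _ => ?_
        rw [FF, Finset.mul_sum]

/-- Möbius reduction: equality of T-moments implies equality of survival values at
all combined rows. -/
lemma moment_reduction {c g : Fin m → ℝ} {Q Q' : Fin m → Fin k → Bool}
    {p p' : (Fin k → Bool) → ℝ} (hcg : Ncong c g)
    (h1 : ∑ A, p A = 1) (h1' : ∑ A, p' A = 1)
    (hT : ∀ S : Finset (Fin m), S.Nonempty →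
      ∑ A, Tent c g Q' S A * p' A = ∑ A, Tent c g Q S A * p A) :
    ∀ S : Finset (Fin m), FF p' (rowOr Q' S) = FF p (rowOr Q S) := by
  intro S
  induction S using Finset.strongInductionOn with
  | _ S IH =>
    rcases S.eq_empty_or_nonempty with rfl | hS
    · have he : ∀ (Q₀ : Fin m → Fin k → Bool) (q : (Fin k → Bool) → ℝ),
          FF q (rowOr Q₀ ∅) = ∑ A, q A := by
        intro Q₀ q
        unfold FF
        refine Finset.sum_congr rfl fun A _ => ?_
        rw [if_pos, one_mul]
        intro j hj
        simp [rowOr] at hj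
      rw [he, he, h1, h1']
    · have key := hT S hS
      rw [Tsum_expand, Tsum_expand] at key
      have hsplit : ∀ (f : Finset (Fin m) → ℝ),
          ∑ t ∈ S.powerset, f t = (∑ t ∈ S.powerset \ {S}, f t) + f S := by
        intro f
        rw [Finset.sum_eq_sum_sdiff_singleton_add (Finset.mem_powerset_self S)]
      rw [hsplit, hsplit] at key
      have hdiff : ∑ t ∈ S.powerset \ {S},
            ((∏ i ∈ t, (c i - g i)) * ∏ i ∈ S \ t, g i) * FF p' (rowOr Q' t)
          = ∑ t ∈ S.powerset \ {S},
            ((∏ i ∈ t, (c i - g i)) * ∏ i ∈ S \ t, g i) * FF p (rowOr Q t) := by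
        refine Finset.sum_congr rfl fun t ht => ?_
        rw [Finset.mem_sdiff, Finset.mem_powerset, Finset.mem_singleton] at ht
        rw [IH t (lt_of_le_of_ne ht.1 ht.2)]
      rw [hdiff] at key
      have hcoef : (∏ i ∈ S, (c i - g i)) * ∏ i ∈ S \ S, g i ≠ 0 := by
        rw [Finset.sdiff_self, Finset.prod_empty, mul_one]
        exact Finset.prod_ne_zero_iff.mpr fun i _ => sub_ne_zero.mpr (hcg i)
      exact mul_left_cancel₀ hcoef (by linarith)

lemma FF_anti {p : (Fin k → Bool) → ℝ} (hp : ∀ A, 0 ≤ p A) {v w : Fin k → Bool}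
    (hvw : ∀ j, v j = true → w j = true) : FF p w ≤ FF p v := by
  refine Finset.sum_le_sum fun A _ => ?_
  by_cases h : ∀ j, w j = true → A j = true
  · rw [if_pos h, if_pos fun j hj => h j (hvw j hj)]
  · rw [if_neg h, zero_mul]
    apply mul_nonneg _ (hp A)
    split <;> norm_num

lemma FF_strict {p : (Fin k → Bool) → ℝ} (hp : ∀ A, 0 < p A) {v w : Fin k → Bool}
    (hvw : ∀ j, v j = true → w j = true) (hne : v ≠ w) : FF p w < FF p v := by
  refine Finset.sum_lt_sum (fun A _ => ?_) ⟨v, Finset.mem_univ v, ?_⟩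
  · by_cases h : ∀ j, w j = true → A j = true
    · rw [if_pos h, if_pos fun j hj => h j (hvw j hj)]
    · rw [if_neg h, zero_mul]
      apply mul_nonneg _ (hp A).le
      split <;> norm_num
  · have hj : ∃ j, w j = true ∧ v j = false := by
      by_contra hcon
      push_neg at hcon
      exact hne (funext fun j => by
        cases hv : v j
        · cases hw : w j
          · rfl
          · exact absurd (hcon j hw) (by simp [hv])
        · rw [hvw j hv])
    obtain ⟨j, hwj, hvj⟩ := hj
    rw [if_neg (fun h => by simp [h j hwj] at hvj), if_pos (fun _ h => h), zero_mul, one_mul]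
    exact hp v

lemma rowOr_image_eq {Q : Fin m → Fin k → Bool} {ej : Fin k → Fin m}
    (hej : ∀ j j', Q (ej j) j' = decide (j' = j)) (J : Finset (Fin k)) :
    rowOr Q (J.image ej) = indF J := by
  funext j'
  simp only [rowOr, indF, decide_eq_decide]
  constructor
  · rintro ⟨i, hi, hQi⟩
    obtain ⟨j, hjJ, rfl⟩ := Finset.mem_image.mp hi
    rw [hej j j', decide_eq_true_eq] at hQi
    rwa [hQi]
  · intro hj'
    exact ⟨ej j', Finset.mem_image_of_mem ej hj', by rw [hej]; simp⟩

/-- Combinatorial identifiability step. -/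
theorem identifiability_comb {Q Q' : Fin m → Fin k → Bool}
    {p p' : (Fin k → Bool) → ℝ}
    (hQcomp : Complete Q) (hdiv : ∀ A, 0 < p A) (hp' : ∀ A, 0 ≤ p' A)
    (hu : ∀ S : Finset (Fin m), FF p' (rowOr Q' S) = FF p (rowOr Q S)) :
    QEquiv Q Q' := by
  classical
  -- completeness rows
  set ej : Fin k → Fin m := fun j => (hQcomp j).choose with hejdef
  have hej : ∀ j j', Q (ej j) j' = decide (j' = j) := fun j => (hQcomp j).choose_spec
  have rowOr_img : ∀ J : Finset (Fin k), rowOr Q (J.image ej) = indF J := by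
    intro J; funext j'
    simp only [rowOr, indF, decide_eq_decide]
    constructor
    · rintro ⟨i, hi, hQi⟩
      obtain ⟨j, hjJ, rfl⟩ := Finset.mem_image.mp hi
      rw [hej j j', decide_eq_true_eq] at hQi
      rwa [hQi]
    · intro hj'
      exact ⟨ej j', Finset.mem_image_of_mem ej hj', by rw [hej]; simp⟩
  set W : Finset (Fin k) → (Fin k → Bool) := fun J => rowOr Q' (J.image ej) with hWdef
  set sJ : Finset (Fin k) → Finset (Fin k) :=
    fun J => univ.filter (fun j => W J j = true) with hsJdef
  set FJ : Finset (Fin k) → ℝ := fun J => FF p (indF J) with hFJdef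
  have hG : ∀ J, FF p' (W J) = FJ J := by
    intro J
    have := hu (J.image ej)
    rwa [rowOr_img] at this
  have W_eq : ∀ J, W J = indF (sJ J) := by
    intro J; funext j
    simp [hsJdef, indF]
  have FJ_strict : ∀ {J J' : Finset (Fin k)}, J ⊂ J' → FJ J' < FJ J := by
    intro J J' hJJ
    refine FF_strict hdiv (fun j hj => ?_) (fun h => ?_)
    · simp only [indF, decide_eq_true_eq] at hj ⊢
      exact hJJ.1 hj
    · obtain ⟨a, haJ', haJ⟩ := Finset.exists_of_ssubset hJJ
      have := congrFun h a
      simp [indF, haJ', haJ] at this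
  have sJ_mono : ∀ {J J' : Finset (Fin k)}, J ⊆ J' → sJ J ⊆ sJ J' := by
    intro J J' hJJ j hj
    simp only [hsJdef, Finset.mem_filter, Finset.mem_univ, true_and] at hj ⊢
    simp only [hWdef, rowOr, decide_eq_true_eq] at hj ⊢
    obtain ⟨i, hi, hQi⟩ := hj
    exact ⟨i, Finset.image_subset_image hJJ hi, hQi⟩
  have sJ_strict : ∀ {J J' : Finset (Fin k)}, J ⊂ J' → sJ J ⊂ sJ J' := by
    intro J J' hJJ
    refine ⟨sJ_mono hJJ.1, fun hcon => ?_⟩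
    have hWeq : W J = W J' := by
      rw [W_eq, W_eq, Finset.Subset.antisymm (sJ_mono hJJ.1) hcon]
    have := FJ_strict hJJ
    rw [← hG, ← hG, hWeq] at this
    exact lt_irrefl _ this
  -- cardinality lemma
  have hcard1 : ∀ (D J : Finset (Fin k)), Disjoint D J →
      (sJ J).card + D.card ≤ (sJ (J ∪ D)).card := by
    intro D
    induction D using Finset.induction_on with
    | empty => intro J _; simp
    | @insert a D ha IH =>
      intro J hD
      have haJ : a ∉ J := by
        have := Finset.disjoint_left.mp hD (Finset.mem_insert_self a D)
        exact this
      have hDJ : Disjoint D J := Finset.disjoint_of_subset_left (Finset.subset_insert a D) hD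
      have h1 : J ∪ insert a D = insert a (J ∪ D) := by
        ext x; simp [or_comm, or_assoc, or_left_comm]
      have h2 : J ∪ D ⊂ insert a (J ∪ D) := by
        refine Finset.ssubset_insert ?_
        simp only [Finset.mem_union, not_or]
        exact ⟨haJ, ha⟩
      have h3 := Finset.card_lt_card (sJ_strict h2)
      have h4 := IH J hDJ
      rw [h1, Finset.card_insert_of_notMem ha]
      omega
  have hcard : ∀ J : Finset (Fin k), (sJ J).card = J.card := by
    intro J
    have hle : J.card ≤ (sJ J).card := by
      have := hcard1 J ∅ (Finset.disjoint_empty_right J)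
      simp only [Finset.empty_union] at this
      omega
    have hge : (sJ J).card ≤ J.card := by
      have hdisj : Disjoint (univ \ J) J := Finset.sdiff_disjoint
      have := hcard1 (univ \ J) J hdisj
      rw [Finset.union_sdiff_of_subset (Finset.subset_univ J)] at this
      have h5 : (sJ univ).card ≤ k := by
        have := Finset.card_le_univ (sJ univ)
        simpa using this
      have h6 : (univ \ J).card + J.card = k := by
        have := Finset.card_sdiff_add_card_eq_card (Finset.subset_univ J)
        simpa using this
      omega
    omega
  -- the permutation
  have hsingle : ∀ j : Fin k, ∃ a, sJ {j} = {a} := by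
    intro j
    apply Finset.card_eq_one.mp
    rw [hcard]
    simp
  set σfun : Fin k → Fin k := fun j => (hsingle j).choose with hσfundef
  have hσ : ∀ j, sJ {j} = {σfun j} := fun j => (hsingle j).choose_spec
  have sJ_union : ∀ J J' : Finset (Fin k), sJ (J ∪ J') = sJ J ∪ sJ J' := by
    intro J J'
    ext x
    simp only [hsJdef, Finset.mem_filter, Finset.mem_univ, true_and, Finset.mem_union]
    simp only [hWdef, rowOr, Finset.image_union, decide_eq_true_eq]
    constructor
    · rintro ⟨i, hi, hQi⟩
      rcases Finset.mem_union.mp hi with h | h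
      · exact Or.inl ⟨i, h, hQi⟩
      · exact Or.inr ⟨i, h, hQi⟩
    · rintro (⟨i, hi, hQi⟩ | ⟨i, hi, hQi⟩)
      · exact ⟨i, Finset.mem_union_left _ hi, hQi⟩
      · exact ⟨i, Finset.mem_union_right _ hi, hQi⟩
  have sJ_image : ∀ J : Finset (Fin k), sJ J = J.image σfun := by
    intro J
    induction J using Finset.induction_on with
    | empty =>
      have : (sJ ∅).card = 0 := by rw [hcard]; simp
      rw [Finset.card_eq_zero.mp this]
      simp
    | @insert a J ha IH =>
      have h1 : insert a J = {a} ∪ J := by ext x; simp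
      rw [h1, sJ_union, hσ, IH, Finset.image_union]
      simp
  have hinj : Function.Injective σfun := by
    intro j j' hjj
    by_contra hne
    have h2 : ({j, j'} : Finset (Fin k)).card = 2 := Finset.card_pair hne
    have h3 := hcard {j, j'}
    rw [sJ_image] at h3
    have : ({j, j'} : Finset (Fin k)).image σfun = {σfun j} := by
      rw [Finset.image_insert, Finset.image_singleton, hjj]
      simp
    rw [this, h2] at h3
    simp at h3
  set σ : Equiv.Perm (Fin k) := Equiv.ofBijective σfun (Finite.injective_iff_bijective.mp hinj)
    with hσdef
  have hσap : ∀ j, σ j = σfun j := fun j => rfl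
  have himg_symm : ∀ X : Finset (Fin k), (X.image σ.symm).image σfun = X := by
    intro X
    rw [Finset.image_image]
    have : (σfun ∘ σ.symm) = id := by
      funext x
      simp only [Function.comp_apply, id_eq, ← hσap]
      exact σ.apply_symm_apply x
    rw [this, Finset.image_id]
  have hG' : ∀ J, FF p' (indF (J.image σfun)) = FJ J := by
    intro J
    rw [← sJ_image, ← W_eq]
    exact hG J
  have hGs : ∀ X Y : Finset (Fin k), X ⊂ Y → FF p' (indF Y) < FF p' (indF X) := by
    intro X Y hXY
    have hXY' : X.image σ.symm ⊂ Y.image σ.symm := by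
      refine ⟨Finset.image_subset_image hXY.1, fun hcon => ?_⟩
      have hYX : Y ⊆ X := by
        have := Finset.image_subset_image (f := σfun) hcon
        rwa [himg_symm, himg_symm] at this
      exact hXY.2 hYX
    have := FJ_strict hXY'
    rw [← hG', ← hG', himg_symm, himg_symm] at this
    exact this
  -- per-row analysis
  have hrow : ∀ i : Fin m, (univ.filter fun j => Q' i j = true)
      = (univ.filter fun j => Q i j = true).image σfun := by
    intro i
    set si := univ.filter (fun j => Q i j = true) with hsidef
    set si' := univ.filter (fun j => Q' i j = true) with hsi'def
    have hstar : ∀ J : Finset (Fin k),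
        FF p' (indF (si' ∪ J.image σfun)) = FJ (si ∪ J) := by
      intro J
      have h := hu (insert i (J.image ej))
      have hl : rowOr Q' (insert i (J.image ej)) = indF (si' ∪ J.image σfun) := by
        funext j'
        simp only [rowOr, indF, decide_eq_decide, Finset.mem_union, Finset.mem_insert]
        rw [← sJ_image]
        simp only [hsJdef, Finset.mem_filter, Finset.mem_univ, true_and, hsi'def]
        simp only [hWdef, rowOr, decide_eq_true_eq]
        constructor
        · rintro ⟨i0, (rfl | hi0), hQi0⟩
          · exact Or.inl hQi0
          · exact Or.inr ⟨i0, hi0, hQi0⟩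
        · rintro (h | ⟨i0, hi0, hQi0⟩)
          · exact ⟨i, Or.inl rfl, h⟩
          · exact ⟨i0, Or.inr hi0, hQi0⟩
      have hr : rowOr Q (insert i (J.image ej)) = indF (si ∪ J) := by
        funext j'
        simp only [rowOr, indF, decide_eq_decide, Finset.mem_union, Finset.mem_insert, hsidef,
          Finset.mem_filter, Finset.mem_univ, true_and]
        constructor
        · rintro ⟨i0, (rfl | hi0), hQi0⟩
          · exact Or.inl hQi0
          · obtain ⟨j, hjJ, rfl⟩ := Finset.mem_image.mp hi0
            rw [hej j j', decide_eq_true_eq] at hQi0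
            exact Or.inr (hQi0 ▸ hjJ)
        · rintro (h | hj')
          · exact ⟨i, Or.inl rfl, h⟩
          · exact ⟨ej j', Or.inr (Finset.mem_image_of_mem ej hj'), by rw [hej]; simp⟩
      rw [hl, hr] at h
      exact h
    -- step 1 : si' ⊆ si.image σfun
    have hsub1 : si' ⊆ si.image σfun := by
      by_contra hcon
      have hss : si.image σfun ⊂ si' ∪ si.image σfun := by
        refine ⟨Finset.subset_union_right, fun hsub => ?_⟩
        exact hcon fun x hx => by
          have := hsub (Finset.mem_union_left _ hx)
          exact this
      have h1 := hstar si
      rw [Finset.union_self] at h1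
      rw [← hG' si] at h1
      exact absurd h1 (ne_of_lt (hGs _ _ hss))
    -- step 2 : si ⊆ (si'.image σ.symm)
    have hsub2 : si.image σfun ⊆ si' := by
      set t := si'.image σ.symm with htdef
      have himg : t.image σfun = si' := himg_symm si'
      have h1 := hstar t
      rw [himg, Finset.union_self] at h1
      have h2 := hG' t
      rw [himg] at h2
      rw [h2] at h1
      have hsub : si ⊆ t := by
        by_contra hcon
        have hss : t ⊂ si ∪ t := by
          refine ⟨Finset.subset_union_right, fun hsub => ?_⟩
          exact hcon fun x hx => hsub (Finset.mem_union_left _ hx)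
        exact absurd h1.symm (ne_of_lt (FJ_strict hss))
      calc si.image σfun ⊆ t.image σfun := Finset.image_subset_image hsub
        _ = si' := himg
    exact le_antisymm hsub1 hsub2
  refine ⟨σ.symm, fun i j => ?_⟩
  have hiff : Q' i j = true ↔ Q i (σ.symm j) = true := by
    constructor
    · intro h
      have hj : j ∈ (univ.filter fun j => Q i j = true).image σfun := by
        rw [← hrow i]; simp [h]
      obtain ⟨j0, hj0, hj0e⟩ := Finset.mem_image.mp hj
      have : σ.symm j = j0 := by
        rw [← hj0e, ← hσap]
        exact σ.symm_apply_apply j0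
      rw [this]
      exact (Finset.mem_filter.mp hj0).2
    · intro h
      have hj : j ∈ (univ.filter fun j => Q i j = true).image σfun := by
        refine Finset.mem_image.mpr ⟨σ.symm j, ?_, ?_⟩
        · simp [h]
        · rw [← hσap]; exact σ.apply_symm_apply j
      rw [← hrow i] at hj
      exact (Finset.mem_filter.mp hj).2
  cases hq' : Q' i j
  · cases hq : Q i (σ.symm j)
    · rfl
    · exact absurd (hiff.mpr hq) (by rw [hq']; simp)
  · exact (hiff.mp hq').symm


/-- zeta-matrix injectivity (Möbius inversion). -/
lemma mobius_inj {x : (Fin k → Bool) → ℝ}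
    (h : ∀ v : Fin k → Bool,
      ∑ A, (if ∀ j, v j = true → A j = true then (1:ℝ) else 0) * x A = 0) :
    ∀ A, x A = 0 := by
  classical
  have key : ∀ n : ℕ, ∀ A : Fin k → Bool,
      k ≤ (univ.filter fun j => A j = true).card + n → x A = 0 := by
    intro n
    induction n with
    | zero =>
      intro A hA
      have hfull : (univ.filter fun j => A j = true) = univ :=
        Finset.eq_of_subset_of_card_le (Finset.subset_univ _) (by simpa using hA)
      have hAtrue : ∀ j, A j = true := by
        intro j
        have : j ∈ univ.filter fun j => A j = true := by rw [hfull]; exact Finset.mem_univ j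
        exact (Finset.mem_filter.mp this).2
      have hsum := h A
      rw [Finset.sum_eq_single A] at hsum
      · rwa [if_pos (fun j h => h), one_mul] at hsum
      · intro B _ hBA
        rw [if_neg, zero_mul]
        intro hcon
        exact hBA (funext fun j => by rw [hcon j (hAtrue j), hAtrue j])
      · intro hA'; exact absurd (Finset.mem_univ A) hA'
    | succ n IH =>
      intro A hA
      have hsum := h A
      rw [← Finset.add_sum_erase _ _ (Finset.mem_univ A), if_pos (fun j h => h), one_mul]
        at hsum
      have hzero : ∀ B ∈ univ.erase A,
          (if ∀ j, A j = true → B j = true then (1:ℝ) else 0) * x B = 0 := by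
        intro B hB
        have hBA : B ≠ A := (Finset.mem_erase.mp hB).1
        by_cases hle : ∀ j, A j = true → B j = true
        · have hsub : (univ.filter fun j => A j = true) ⊂ (univ.filter fun j => B j = true) := by
            refine ⟨fun j hj => ?_, fun hcon => ?_⟩
            · rw [Finset.mem_filter] at hj ⊢
              exact ⟨hj.1, hle j hj.2⟩
            · refine hBA (funext fun j => ?_)
              cases hAj : A j
              · cases hBj : B j
                · rfl
                · have : j ∈ univ.filter fun j => A j = true := by
                    apply hcon; rw [Finset.mem_filter]; exact ⟨Finset.mem_univ j, hBj⟩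
                  rw [Finset.mem_filter] at this
                  rw [this.2] at hAj; exact absurd hAj (by simp)
              · rw [hle j hAj]
          have hcardB : k ≤ (univ.filter fun j => B j = true).card + n := by
            have := Finset.card_lt_card hsub
            omega
          rw [IH B hcardB, mul_zero]
        · rw [if_neg hle, zero_mul]
      rw [Finset.sum_eq_zero hzero, add_zero] at hsum
      exact hsum
  intro A
  exact key k A (by omega)


lemma isCompact_probVec : IsCompact {q : (Fin k → Bool) → ℝ | ProbVec q} := by
  have hsub : {q : (Fin k → Bool) → ℝ | ProbVec q}
      ⊆ Set.pi Set.univ (fun _ => Set.Icc (0:ℝ) 1) := by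
    intro q hq A _
    refine ⟨hq.1 A, ?_⟩
    rw [← hq.2]
    exact Finset.single_le_sum (fun i _ => hq.1 i) (Finset.mem_univ A)
  have hcomp : IsCompact (Set.pi Set.univ (fun _ : Fin k → Bool => Set.Icc (0:ℝ) 1)) :=
    isCompact_univ_pi fun _ => isCompact_Icc
  refine hcomp.of_isClosed_subset ?_ hsub
  have h1 : IsClosed {q : (Fin k → Bool) → ℝ | ∀ A, 0 ≤ q A} := by
    have : {q : (Fin k → Bool) → ℝ | ∀ A, 0 ≤ q A} = ⋂ A, {q : (Fin k → Bool) → ℝ | 0 ≤ q A} := by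
      ext q; simp
    rw [this]
    exact isClosed_iInter fun A => isClosed_le continuous_const (continuous_apply A)
  have h2 : IsClosed {q : (Fin k → Bool) → ℝ | ∑ A, q A = 1} :=
    isClosed_eq (continuous_finset_sum _ fun A _ => continuous_apply A) continuous_const
  have : {q : (Fin k → Bool) → ℝ | ProbVec q} = {q | ∀ A, 0 ≤ q A} ∩ {q | ∑ A, q A = 1} := rfl
  rw [this]
  exact h1.inter h2

lemma probVec_exists : ∃ q : (Fin k → Bool) → ℝ, ProbVec q := by
  refine ⟨fun _ => (Fintype.card (Fin k → Bool) : ℝ)⁻¹, fun A => by positivity, ?_⟩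
  rw [Finset.sum_const, nsmul_eq_mul, Finset.card_univ, mul_inv_cancel₀]
  exact Nat.cast_ne_zero.mpr Fintype.card_ne_zero

lemma min_attain {f : ((Fin k → Bool) → ℝ) → ℝ} (hf : Continuous f) :
    ∃ q, ProbVec q ∧ ∀ q', ProbVec q' → f q ≤ f q' := by
  obtain ⟨q0, hq0⟩ := probVec_exists (k := k)
  obtain ⟨q, hq, hmin⟩ := isCompact_probVec.exists_isMinOn ⟨q0, hq0⟩ hf.continuousOn
  exact ⟨q, hq, fun q' hq' => hmin hq'⟩

lemma cont_obj {ρ : Type*} [Fintype ρ] (M : Matrix ρ (Fin k → Bool) ℝ) (y : ρ → ℝ) :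
    Continuous fun q : (Fin k → Bool) → ℝ => eNorm (M *ᵥ q - y) := by
  apply continuous_eNorm.comp
  refine Continuous.sub ?_ continuous_const
  apply continuous_pi
  intro S
  show Continuous fun q : (Fin k → Bool) → ℝ => ∑ A, M S A * q A
  exact continuous_finset_sum _ fun A _ => continuous_const.mul (continuous_apply A)

lemma qequiv_refl (Q : Fin m → Fin k → Bool) : QEquiv Q Q :=
  ⟨1, fun _ _ => rfl⟩

lemma qequiv_symm {Q Q' : Fin m → Fin k → Bool} (h : QEquiv Q Q') : QEquiv Q' Q := by
  obtain ⟨σ, hσ⟩ := h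
  refine ⟨σ.symm, fun i j => ?_⟩
  have := hσ i (σ.symm j)
  rw [σ.apply_symm_apply] at this
  exact this.symm

/-- identifiability in matrix form -/
lemma tmat_identify {c g : Fin m → ℝ} {Q Q' : Fin m → Fin k → Bool}
    {p p' : (Fin k → Bool) → ℝ}
    (hQcomp : Complete Q) (hcg : Ncong c g) (hp : ProbVec p) (hdiv : ∀ A, 0 < p A)
    (hp' : ProbVec p') (hT : Tmat c g Q' *ᵥ p' = Tmat c g Q *ᵥ p) : QEquiv Q Q' := by
  apply identifiability_comb hQcomp hdiv hp'.1
  apply moment_reduction hcg hp.2 hp'.2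
  intro S hS
  have := congrFun hT ⟨S, hS⟩
  simpa [Tmat, Matrix.mulVec, dotProduct] using this

/-- injectivity at the true Q -/
lemma tmat_p_inj {c g : Fin m → ℝ} {Q : Fin m → Fin k → Bool}
    {p p' : (Fin k → Bool) → ℝ}
    (hQcomp : Complete Q) (hcg : Ncong c g) (hp : ProbVec p) (hp' : ProbVec p')
    (hT : Tmat c g Q *ᵥ p' = Tmat c g Q *ᵥ p) : p' = p := by
  have hmom := moment_reduction (Q := Q) (Q' := Q) hcg hp.2 hp'.2 (fun S hS => by
    have := congrFun hT ⟨S, hS⟩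
    simpa [Tmat, Matrix.mulVec, dotProduct] using this)
  have hFF : ∀ v : Fin k → Bool, FF p' v = FF p v := by
    intro v
    have hrow : rowOr Q ((Finset.univ.filter fun j => v j = true).image
        (fun j => (hQcomp j).choose)) = v := by
      rw [rowOr_image_eq (fun j => (hQcomp j).choose_spec)]
      funext j
      simp [indF]
    have := hmom ((Finset.univ.filter fun j => v j = true).image (fun j => (hQcomp j).choose))
    rwa [hrow] at this
  have hzero := mobius_inj (x := fun A => p' A - p A) (fun v => by
    have := hFF v
    unfold FF at this
    have hsplit : ∑ A, (if ∀ j, v j = true → A j = true then (1:ℝ) else 0) * (p' A - p A)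
        = (∑ A, (if ∀ j, v j = true → A j = true then (1:ℝ) else 0) * p' A)
          - ∑ A, (if ∀ j, v j = true → A j = true then (1:ℝ) else 0) * p A := by
      rw [← Finset.sum_sub_distrib]
      exact Finset.sum_congr rfl fun A _ => by ring
    rw [hsplit, this, sub_self])
  funext A
  have h2 : p' A - p A = 0 := hzero A
  linarith

/-- uniform separation of non-equivalent Q-matrices -/
lemma delta_sep {c g : Fin m → ℝ} {Q : Fin m → Fin k → Bool} {p : (Fin k → Bool) → ℝ}
    (hQcomp : Complete Q) (hcg : Ncong c g) (hp : ProbVec p) (hdiv : ∀ A, 0 < p A) :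
    ∃ δ > (0:ℝ), ∀ Q' : Fin m → Fin k → Bool, ¬QEquiv Q Q' → ∀ p', ProbVec p' →
      δ ≤ eNorm (Tmat c g Q' *ᵥ p' - Tmat c g Q *ᵥ p) := by
  classical
  have hmin : ∀ Q' : Fin m → Fin k → Bool, ∃ q, ProbVec q ∧ ∀ q', ProbVec q' →
      eNorm (Tmat c g Q' *ᵥ q - Tmat c g Q *ᵥ p)
        ≤ eNorm (Tmat c g Q' *ᵥ q' - Tmat c g Q *ᵥ p) :=
    fun Q' => min_attain (cont_obj _ _)
  set d : (Fin m → Fin k → Bool) → ℝ :=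
    fun Q' => eNorm (Tmat c g Q' *ᵥ (hmin Q').choose - Tmat c g Q *ᵥ p) with hddef
  have hdpos : ∀ Q', ¬QEquiv Q Q' → 0 < d Q' := by
    intro Q' hne
    rcases lt_or_eq_of_le (eNorm_nonneg (Tmat c g Q' *ᵥ (hmin Q').choose - Tmat c g Q *ᵥ p))
      with h | h
    · exact h
    · exfalso
      have h0 := eNorm_eq_zero h.symm
      have heq : Tmat c g Q' *ᵥ (hmin Q').choose = Tmat c g Q *ᵥ p := sub_eq_zero.mp h0
      exact hne (tmat_identify hQcomp hcg hp hdiv (hmin Q').choose_spec.1 heq)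
  set s : Finset (Fin m → Fin k → Bool) := Finset.univ.filter (fun Q' => ¬QEquiv Q Q')
    with hsdef
  by_cases hs : s.Nonempty
  · refine ⟨s.inf' hs d, ?_, ?_⟩
    · rw [gt_iff_lt, Finset.lt_inf'_iff]
      intro Q' hQ'
      exact hdpos Q' (by simpa [hsdef] using (Finset.mem_filter.mp hQ').2)
    · intro Q' hne p' hp'
      have h1 : s.inf' hs d ≤ d Q' :=
        Finset.inf'_le d (Finset.mem_filter.mpr ⟨Finset.mem_univ _, by simpa [hsdef] using hne⟩)
      exact le_trans h1 ((hmin Q').choose_spec.2 p' hp')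
  · refine ⟨1, one_pos, fun Q' hne p' hp' => ?_⟩
    exact absurd ⟨Q', Finset.mem_filter.mpr ⟨Finset.mem_univ _, by simpa [hsdef] using hne⟩⟩ hs

/-- quantitative injectivity -/
lemma inj_quant {c g : Fin m → ℝ} {Q : Fin m → Fin k → Bool} {p : (Fin k → Bool) → ℝ}
    (hQcomp : Complete Q) (hcg : Ncong c g) (hp : ProbVec p) {ε : ℝ} (hε : 0 < ε) :
    ∃ δ > (0:ℝ), ∀ p', ProbVec p' →
      eNorm (Tmat c g Q *ᵥ p' - Tmat c g Q *ᵥ p) < δ → eNorm (p' - p) ≤ ε := by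
  classical
  set K : Set ((Fin k → Bool) → ℝ) := {q | ProbVec q} ∩ {q | ε ≤ eNorm (q - p)} with hKdef
  have hKcomp : IsCompact K := isCompact_probVec.inter_right
    (isClosed_le continuous_const (continuous_eNorm.comp (continuous_id.sub continuous_const)))
  by_cases hK : K.Nonempty
  · obtain ⟨q0, hq0K, hq0min⟩ := hKcomp.exists_isMinOn hK
      (cont_obj (Tmat c g Q) (Tmat c g Q *ᵥ p)).continuousOn
    set δ := eNorm (Tmat c g Q *ᵥ q0 - Tmat c g Q *ᵥ p) with hδdef
    have hδpos : 0 < δ := by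
      rcases lt_or_eq_of_le (eNorm_nonneg (Tmat c g Q *ᵥ q0 - Tmat c g Q *ᵥ p)) with h | h
      · exact h
      · exfalso
        have heq := tmat_p_inj hQcomp hcg hp hq0K.1 (sub_eq_zero.mp (eNorm_eq_zero h.symm))
        have h2 : ε ≤ eNorm (q0 - p) := hq0K.2
        rw [heq, sub_self, eNorm_zero] at h2
        linarith
    refine ⟨δ, hδpos, fun p' hp' hlt => ?_⟩
    by_contra hcon
    push_neg at hcon
    have hmem : p' ∈ K := ⟨hp', le_of_lt hcon⟩
    exact absurd hlt (not_lt.mpr (hq0min hmem))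
  · refine ⟨1, one_pos, fun p' hp' _ => ?_⟩
    by_contra hcon
    push_neg at hcon
    exact hK ⟨p', hp', le_of_lt hcon⟩

lemma Sobj_le {c g : Fin m → ℝ} {Q' : Fin m → Fin k → Bool}
    {α : {S : Finset (Fin m) // S.Nonempty} → ℝ} {q : (Fin k → Bool) → ℝ} (hq : ProbVec q) :
    Sobj c g Q' α ≤ eNorm (Tmat c g Q' *ᵥ q - α) := by
  apply csInf_le
  · refine ⟨0, ?_⟩
    rintro x ⟨p', _, rfl⟩
    exact eNorm_nonneg _
  · exact ⟨q, hq, rfl⟩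

lemma le_Sobj {c g : Fin m → ℝ} {Q' : Fin m → Fin k → Bool}
    {α : {S : Finset (Fin m) // S.Nonempty} → ℝ} {b : ℝ}
    (hb : ∀ q, ProbVec q → b ≤ eNorm (Tmat c g Q' *ᵥ q - α)) : b ≤ Sobj c g Q' α := by
  apply le_csInf
  · obtain ⟨q, hq⟩ := probVec_exists (k := k)
    exact ⟨_, q, hq, rfl⟩
  · rintro x ⟨q, hq, rfl⟩
    exact hb q hq

lemma piDINA_mem (c g : Fin m → ℝ) (hc : ∀ i, c i ∈ Set.Icc (0:ℝ) 1)
    (hg : ∀ i, g i ∈ Set.Icc (0:ℝ) 1) (Q : Fin m → Fin k → Bool) (i : Fin m)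
    (A : Fin k → Bool) : piDINA c g Q i A ∈ Set.Icc (0:ℝ) 1 := by
  unfold piDINA xiDINA
  split
  · simpa using hc i
  · simpa using hg i

lemma dinaPMF_nonneg {c g : Fin m → ℝ} (hc : ∀ i, c i ∈ Set.Icc (0:ℝ) 1)
    (hg : ∀ i, g i ∈ Set.Icc (0:ℝ) 1) {Q : Fin m → Fin k → Bool}
    {p : (Fin k → Bool) → ℝ} (hp : ∀ A, 0 ≤ p A) (a : Fin k → Bool) (r : Fin m → Bool) :
    0 ≤ dinaPMF c g Q p a r := by
  refine mul_nonneg (hp a) (Finset.prod_nonneg fun i _ => ?_)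
  have := piDINA_mem c g hc hg Q i a
  split
  · exact this.1
  · linarith [this.2]

/-- the key factorization: summing the pmf times the indicator product gives the T entry -/
lemma pmf_factorization (c g : Fin m → ℝ) (hc : ∀ i, c i ∈ Set.Icc (0:ℝ) 1)
    (hg : ∀ i, g i ∈ Set.Icc (0:ℝ) 1) (Q : Fin m → Fin k → Bool)
    (p : (Fin k → Bool) → ℝ) (S : Finset (Fin m)) (a : Fin k → Bool) :
    ∑ r : Fin m → Bool, dinaPMF c g Q p a r * ∏ i ∈ S, (if r i then (1:ℝ) else 0)
      = p a * Tent c g Q S a := by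
  have step1 : ∀ r : Fin m → Bool,
      dinaPMF c g Q p a r * ∏ i ∈ S, (if r i then (1:ℝ) else 0)
        = p a * ∏ i, ((if r i then piDINA c g Q i a else 1 - piDINA c g Q i a) *
            (if i ∈ S then (if r i then (1:ℝ) else 0) else 1)) := by
    intro r
    unfold dinaPMF
    rw [Finset.prod_mul_distrib]
    have : ∏ i ∈ S, (if r i then (1:ℝ) else 0)
        = ∏ i, (if i ∈ S then (if r i then (1:ℝ) else 0) else 1) := by
      rw [← Finset.prod_subset (Finset.subset_univ S) (fun i _ hi => if_neg hi)]
      exact Finset.prod_congr rfl fun i hi => (if_pos hi).symm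
    rw [this]; ring
  rw [Finset.sum_congr rfl fun r _ => step1 r, ← Finset.mul_sum]
  congr 1
  have hTent : Tent c g Q S a = ∏ i : Fin m,
      ∑ b : Bool, ((if b then piDINA c g Q i a else 1 - piDINA c g Q i a) *
        (if i ∈ S then (if b then (1:ℝ) else 0) else 1)) := by
    have h1 : ∀ i : Fin m, (∑ b : Bool, ((if b then piDINA c g Q i a else 1 - piDINA c g Q i a) *
        (if i ∈ S then (if b then (1:ℝ) else 0) else 1)))
        = if i ∈ S then piDINA c g Q i a else 1 := by
      intro i
      rw [Fintype.sum_bool]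
      by_cases hi : i ∈ S <;> simp [hi] <;> ring
    rw [Finset.prod_congr rfl fun i _ => h1 i]
    unfold Tent
    rw [← Finset.prod_subset (Finset.subset_univ S) (fun i _ hi => if_neg hi)]
    exact Finset.prod_congr rfl fun i hi => (if_pos hi).symm
  rw [hTent, Finset.prod_univ_sum]
  rw [Fintype.piFinset_univ]


/-- identical distribution of the observation pairs -/
lemma ident_pairs {Ω : Type*} [MeasurableSpace Ω] (P : Measure Ω) [IsProbabilityMeasure P]
    {c g : Fin m → ℝ} {Q : Fin m → Fin k → Bool} {p : (Fin k → Bool) → ℝ}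
    (A : ℕ → Ω → (Fin k → Bool)) (R : ℕ → Ω → (Fin m → Bool))
    (hmeas : ∀ n, Measurable (fun ω => (A n ω, R n ω)))
    (hdist : ∀ (n : ℕ) (a : Fin k → Bool) (r : Fin m → Bool),
      P {ω | A n ω = a ∧ R n ω = r} = ENNReal.ofReal (dinaPMF c g Q p a r)) (n : ℕ) :
    IdentDistrib (fun ω => (A n ω, R n ω)) (fun ω => (A 0 ω, R 0 ω)) P P := by
  refine ⟨(hmeas n).aemeasurable, (hmeas 0).aemeasurable, ?_⟩
  apply MeasureTheory.Measure.ext_of_singleton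
  rintro ⟨a, r⟩
  rw [Measure.map_apply (hmeas n) (measurableSet_singleton _),
    Measure.map_apply (hmeas 0) (measurableSet_singleton _)]
  have hset : ∀ nn : ℕ, (fun ω => (A nn ω, R nn ω)) ⁻¹' {(a, r)}
      = {ω | A nn ω = a ∧ R nn ω = r} := by
    intro nn; ext ω; simp [Prod.ext_iff]
  rw [hset, hset, hdist n a r, hdist 0 a r]

/-- strong law for the empirical moments -/
lemma alpha_tendsto_ae {Ω : Type*} [MeasurableSpace Ω] (P : Measure Ω) [IsProbabilityMeasure P]
    {c g : Fin m → ℝ} {Q : Fin m → Fin k → Bool} {p : (Fin k → Bool) → ℝ}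
    (hc : ∀ i, c i ∈ Set.Icc (0:ℝ) 1) (hg : ∀ i, g i ∈ Set.Icc (0:ℝ) 1)
    (hp : ProbVec p)
    (A : ℕ → Ω → (Fin k → Bool)) (R : ℕ → Ω → (Fin m → Bool))
    (hmeas : ∀ n, Measurable (fun ω => (A n ω, R n ω)))
    (hindep : iIndepFun (fun n ω => (A n ω, R n ω)) P)
    (hdist : ∀ (n : ℕ) (a : Fin k → Bool) (r : Fin m → Bool),
      P {ω | A n ω = a ∧ R n ω = r} = ENNReal.ofReal (dinaPMF c g Q p a r)) :
    ∀ᵐ ω ∂P, Tendsto (fun N => alphaVec (fun r => R r ω) N) atTop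
      (nhds (Tmat c g Q *ᵥ p)) := by
  classical
  have hcoord : ∀ S : {S : Finset (Fin m) // S.Nonempty},
      ∀ᵐ ω ∂P, Tendsto (fun N => alphaVec (fun r => R r ω) N S) atTop
        (nhds ((Tmat c g Q *ᵥ p) S)) := by
    intro S
    set φ : (Fin k → Bool) × (Fin m → Bool) → ℝ :=
      fun x => ∏ i ∈ S.1, (if x.2 i then (1:ℝ) else 0) with hφdef
    have hφ : Measurable φ := Measurable.of_discrete
    set X : ℕ → Ω → ℝ := fun n ω => φ (A n ω, R n ω) with hXdef
    have hXmeas : ∀ n, Measurable (X n) := fun n => hφ.comp (hmeas n)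
    have hφbd : ∀ x, ‖φ x‖ ≤ 1 := by
      intro x
      rw [Real.norm_eq_abs, abs_of_nonneg (Finset.prod_nonneg fun i _ => by split <;> norm_num)]
      exact Finset.prod_le_one (fun i _ => by split <;> norm_num)
        (fun i _ => by split <;> norm_num)
    have hint : Integrable (X 0) P :=
      Integrable.mono' (integrable_const 1) (hXmeas 0).aestronglyMeasurable
        (Filter.Eventually.of_forall fun ω => hφbd _)
    have hpind : Pairwise (fun n n' => IndepFun (X n) (X n') P) := by
      intro n n' hnn
      exact (hindep.indepFun hnn).comp hφ hφ
    have hid : ∀ n, IdentDistrib (X n) (X 0) P P := fun n =>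
      (ident_pairs P A R hmeas hdist n).comp hφ
    have hSL := ProbabilityTheory.strong_law_ae X hint hpind hid
    have hEX : ∫ ω, X 0 ω ∂P = (Tmat c g Q *ᵥ p) S := by
      have hmap : ∫ ω, X 0 ω ∂P = ∫ x, φ x ∂(P.map (fun ω => (A 0 ω, R 0 ω))) := by
        rw [integral_map (hmeas 0).aemeasurable hφ.aestronglyMeasurable]
      have : IsProbabilityMeasure (P.map (fun ω => (A 0 ω, R 0 ω))) :=
        Measure.isProbabilityMeasure_map (hmeas 0).aemeasurable
      rw [hmap, integral_fintype (Integrable.of_finite)]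
      have hval : ∀ x : (Fin k → Bool) × (Fin m → Bool),
          ((P.map (fun ω => (A 0 ω, R 0 ω))) {x}).toReal = dinaPMF c g Q p x.1 x.2 := by
        rintro ⟨a, r⟩
        rw [Measure.map_apply (hmeas 0) (measurableSet_singleton _)]
        have hset : (fun ω => (A 0 ω, R 0 ω)) ⁻¹' {(a, r)}
            = {ω | A 0 ω = a ∧ R 0 ω = r} := by ext ω; simp [Prod.ext_iff]
        rw [hset, hdist 0 a r, ENNReal.toReal_ofReal (dinaPMF_nonneg hc hg hp.1 a r)]
      calc ∑ x : (Fin k → Bool) × (Fin m → Bool),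
            ((P.map (fun ω => (A 0 ω, R 0 ω))) {x}).toReal • φ x
          = ∑ x : (Fin k → Bool) × (Fin m → Bool), dinaPMF c g Q p x.1 x.2 * φ x := by
            refine Finset.sum_congr rfl fun x _ => ?_
            rw [hval x, smul_eq_mul]
        _ = ∑ a : Fin k → Bool, ∑ r : Fin m → Bool, dinaPMF c g Q p a r * φ (a, r) := by
            rw [Fintype.sum_prod_type]
        _ = ∑ a : Fin k → Bool, p a * Tent c g Q S.1 a := by
            refine Finset.sum_congr rfl fun a _ => ?_
            exact pmf_factorization c g hc hg Q p S.1 a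
        _ = (Tmat c g Q *ᵥ p) S := by
            simp only [Matrix.mulVec, dotProduct, Tmat]
            exact Finset.sum_congr rfl fun a _ => mul_comm _ _
    rw [hEX] at hSL
    filter_upwards [hSL] with ω hω
    have halpha : ∀ N, alphaVec (fun r => R r ω) N S = (N:ℝ)⁻¹ • ∑ n ∈ Finset.range N, X n ω := by
      intro N
      rw [alphaVec, smul_eq_mul, inv_mul_eq_div]
    simpa only [halpha] using hω
  have hall := MeasureTheory.ae_all_iff.mpr hcoord
  filter_upwards [hall] with ω hω
  rw [tendsto_pi_nhds]
  exact hω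

/-- from a.s. convergence to events -/
lemma tendsto_event_prob {Ω : Type*} [MeasurableSpace Ω] (P : Measure Ω) [IsProbabilityMeasure P]
    (f : ℕ → Ω → ℝ) (hfm : ∀ N, Measurable (f N)) {δ : ℝ} (hδ : 0 < δ)
    (hae : ∀ᵐ ω ∂P, Tendsto (fun N => f N ω) atTop (nhds 0)) :
    Tendsto (fun N => P {ω | f N ω < δ}) atTop (nhds 1) ∧
      Tendsto (fun N => P {ω | δ ≤ f N ω}) atTop (nhds 0) := by
  classical
  set E : ℕ → Set Ω := fun N => {ω | f N ω < δ} with hEdef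
  have hEmeas : ∀ N, MeasurableSet (E N) := fun N => measurableSet_lt (hfm N) measurable_const
  set F : ℕ → Set Ω := fun N => ⋂ (M : ℕ) (_ : N ≤ M), E M with hFdef
  have hFmeas : ∀ N, MeasurableSet (F N) :=
    fun N => MeasurableSet.iInter fun M => MeasurableSet.iInter fun _ => hEmeas M
  have hFmono : Monotone F := by
    intro N N' hNN ω hω
    simp only [hFdef, Set.mem_iInter] at hω ⊢
    intro M hM
    exact hω M (le_trans hNN hM)
  have hFsub : ∀ N, F N ⊆ E N := by
    intro N ω hω
    simp only [hFdef, Set.mem_iInter] at hω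
    exact hω N le_rfl
  have hUnion : P (⋃ N, F N) = 1 := by
    have hsub : ∀ᵐ ω ∂P, ω ∈ ⋃ N, F N := by
      filter_upwards [hae] with ω hω
      have hev : ∀ᶠ N in atTop, f N ω < δ := hω.eventually_lt_const hδ
      obtain ⟨N₀, hN₀⟩ := eventually_atTop.mp hev
      refine Set.mem_iUnion.mpr ⟨N₀, ?_⟩
      simp only [hFdef, Set.mem_iInter]
      exact fun M hM => hN₀ M hM
    have hms : MeasurableSet (⋃ N, F N) := MeasurableSet.iUnion hFmeas
    rw [← MeasureTheory.prob_compl_eq_zero_iff hms]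
    rw [MeasureTheory.ae_iff] at hsub
    exact hsub
  have hFtend : Tendsto (fun N => P (F N)) atTop (nhds 1) := by
    have := tendsto_measure_iUnion_atTop (μ := P) hFmono
    rwa [hUnion] at this
  have h1 : Tendsto (fun N => P (E N)) atTop (nhds 1) := by
    refine tendsto_of_tendsto_of_tendsto_of_le_of_le hFtend tendsto_const_nhds ?_ ?_
    · exact fun N => measure_mono (hFsub N)
    · exact fun N => prob_le_one
  refine ⟨h1, ?_⟩
  have hcompl : ∀ N, {ω | δ ≤ f N ω} = (E N)ᶜ := by
    intro N; ext ω; simp [hEdef, not_lt]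
  have h2 : ∀ N, P ((E N)ᶜ) = 1 - P (E N) := by
    intro N
    rw [measure_compl (hEmeas N) (measure_ne_top P _), measure_univ]
  have : Tendsto (fun N => 1 - P (E N)) atTop (nhds 0) := by
    have := ENNReal.Tendsto.sub (tendsto_const_nhds (x := (1:ENNReal))) h1
      (Or.inl ENNReal.one_ne_top)
    simpa using this
  simpa only [hcompl, h2] using this



/-- Theorem 1 (DINA, `c` and `g` known): consistency of the Q-matrix estimator and
of the attribute-distribution estimator. -/
theorem dina_known_cg_consistency
    {Ω : Type*} [MeasurableSpace Ω] (P : Measure Ω) [IsProbabilityMeasure P]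
    (Q : Fin m → Fin k → Bool) (c g : Fin m → ℝ) (p : (Fin k → Bool) → ℝ)
    (hc : ∀ i, c i ∈ Set.Icc (0:ℝ) 1) (hg : ∀ i, g i ∈ Set.Icc (0:ℝ) 1)
    (hQcomp : Complete Q) (hcg : Ncong c g) (hp : ProbVec p) (hdiv : ∀ A, 0 < p A)
    -- the i.i.d. sample from the DINA model; only the responses `R` are observed
    (A : ℕ → Ω → (Fin k → Bool)) (R : ℕ → Ω → (Fin m → Bool))
    (hmeas : ∀ n, Measurable (fun ω => (A n ω, R n ω)))
    (hindep : iIndepFun (fun n ω => (A n ω, R n ω)) P)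
    (hdist : ∀ (n : ℕ) (a : Fin k → Bool) (r : Fin m → Bool),
      P {ω | A n ω = a ∧ R n ω = r} = ENNReal.ofReal (dinaPMF c g Q p a r))
    -- a measurable choice of minimizer of `Q' ↦ S_{c,g}(Q')`
    (Qhat : ℕ → Ω → (Fin m → Fin k → Bool))
    (hQhatMeas : ∀ N, Measurable (Qhat N))
    (hQhatMin : ∀ (N : ℕ) (ω : Ω) (Q' : Fin m → Fin k → Bool),
      Sobj c g (Qhat N ω) (alphaVec (fun r => R r ω) N) ≤
        Sobj c g Q' (alphaVec (fun r => R r ω) N)) :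
    -- conclusion 1: P(Q̂_N ∼ Q) → 1
    Tendsto (fun N => P {ω | QEquiv Q (Qhat N ω)}) atTop (nhds 1) ∧
    -- conclusion 2: a measurable column permutation of Q̂_N converging to Q exists
    (∃ Qbar : ℕ → Ω → (Fin m → Fin k → Bool),
      (∀ N, Measurable (Qbar N)) ∧
      (∀ N ω, QEquiv (Qhat N ω) (Qbar N ω)) ∧
      Tendsto (fun N => P {ω | Qbar N ω = Q}) atTop (nhds 1)) ∧
    -- conclusion 3: for any such choice, any measurable minimizing `p̂_N` is consistent
    (∀ Qbar : ℕ → Ω → (Fin m → Fin k → Bool),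
      (∀ N, Measurable (Qbar N)) →
      (∀ N ω, QEquiv (Qhat N ω) (Qbar N ω)) →
      Tendsto (fun N => P {ω | Qbar N ω = Q}) atTop (nhds 1) →
      ∀ phat : ℕ → Ω → ((Fin k → Bool) → ℝ),
        (∀ N, Measurable (phat N)) →
        (∀ N ω, ProbVec (phat N ω) ∧ ∀ p', ProbVec p' →
          eNorm (Tmat c g (Qbar N ω) *ᵥ phat N ω - alphaVec (fun r => R r ω) N) ≤
            eNorm (Tmat c g (Qbar N ω) *ᵥ p' - alphaVec (fun r => R r ω) N)) →
        ∀ ε > (0:ℝ),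
          Tendsto (fun N => P {ω | ε < eNorm (fun a => phat N ω a - p a)})
            atTop (nhds 0)) := by
  classical
  have hRmeas : ∀ n, Measurable (R n) := fun n => measurable_snd.comp (hmeas n)
  set f : ℕ → Ω → ℝ :=
    fun N ω => eNorm (alphaVec (fun r => R r ω) N - Tmat c g Q *ᵥ p) with hfdef
  have hfm : ∀ N, Measurable (f N) := by
    intro N
    have h1 : Measurable (fun ω => alphaVec (fun r => R r ω) N) := by
      apply measurable_pi_lambda
      intro S
      apply Measurable.div_const
      apply Finset.measurable_sum
      intro r _
      apply Finset.measurable_prod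
      intro i _
      exact (Measurable.of_discrete (f := fun b : Bool => if b then (1:ℝ) else 0)).comp
        ((measurable_pi_apply i).comp (hRmeas r))
    exact continuous_eNorm.measurable.comp (h1.sub measurable_const)
  have hae0 : ∀ᵐ ω ∂P, Tendsto (fun N => f N ω) atTop (nhds 0) := by
    filter_upwards [alpha_tendsto_ae P hc hg hp A R hmeas hindep hdist] with ω hω
    have h2 := hω.sub (tendsto_const_nhds (x := Tmat c g Q *ᵥ p))
    rw [sub_self] at h2
    have h3 := (continuous_eNorm.tendsto 0).comp h2
    rwa [eNorm_zero] at h3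
  obtain ⟨δ, hδ, hsep⟩ := delta_sep hQcomp hcg hp hdiv
  have hδ3 : 0 < δ/3 := by linarith
  obtain ⟨hE1, _⟩ := tendsto_event_prob P f hfm hδ3 hae0
  have hincl : ∀ N, {ω | f N ω < δ/3} ⊆ {ω | QEquiv Q (Qhat N ω)} := by
    intro N ω hω
    simp only [Set.mem_setOf_eq] at hω ⊢
    by_contra hne
    have hf : eNorm (alphaVec (fun r => R r ω) N - Tmat c g Q *ᵥ p) < δ/3 := hω
    have hup : Sobj c g (Qhat N ω) (alphaVec (fun r => R r ω) N) < δ/3 := by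
      calc Sobj c g (Qhat N ω) (alphaVec (fun r => R r ω) N)
          ≤ Sobj c g Q (alphaVec (fun r => R r ω) N) := hQhatMin N ω Q
        _ ≤ eNorm (Tmat c g Q *ᵥ p - alphaVec (fun r => R r ω) N) := Sobj_le hp
        _ = eNorm (alphaVec (fun r => R r ω) N - Tmat c g Q *ᵥ p) := eNorm_sub_comm _ _
        _ < δ/3 := hf
    have hlow : 2*δ/3 ≤ Sobj c g (Qhat N ω) (alphaVec (fun r => R r ω) N) := by
      apply le_Sobj
      intro q hq
      have h1 := hsep (Qhat N ω) hne q hq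
      have h2 := eNorm_sub_le (Tmat c g (Qhat N ω) *ᵥ q) (alphaVec (fun r => R r ω) N)
        (Tmat c g Q *ᵥ p)
      linarith
    linarith
  have hconc1 : Tendsto (fun N => P {ω | QEquiv Q (Qhat N ω)}) atTop (nhds 1) :=
    tendsto_of_tendsto_of_tendsto_of_le_of_le hE1 tendsto_const_nhds
      (fun N => measure_mono (hincl N)) (fun N => prob_le_one)
  refine ⟨hconc1, ?_, ?_⟩
  · refine ⟨fun N ω => if QEquiv Q (Qhat N ω) then Q else Qhat N ω, ?_, ?_, ?_⟩
    · intro N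
      show Measurable fun ω => if QEquiv Q (Qhat N ω) then Q else Qhat N ω
      have hset : MeasurableSet {ω | QEquiv Q (Qhat N ω)} := by
        have : {ω | QEquiv Q (Qhat N ω)} = Qhat N ⁻¹' {Q' | QEquiv Q Q'} := rfl
        rw [this]
        exact (hQhatMeas N) MeasurableSet.of_discrete
      exact Measurable.ite hset measurable_const (hQhatMeas N)
    · intro N ω
      show QEquiv (Qhat N ω) (if QEquiv Q (Qhat N ω) then Q else Qhat N ω)
      by_cases h : QEquiv Q (Qhat N ω)
      · rw [if_pos h]; exact qequiv_symm h
      · rw [if_neg h]; exact qequiv_refl _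
    · have hincl2 : ∀ N, {ω | QEquiv Q (Qhat N ω)} ⊆
          {ω | (fun N ω => if QEquiv Q (Qhat N ω) then Q else Qhat N ω) N ω = Q} := by
        intro N ω hω
        simp only [Set.mem_setOf_eq] at hω ⊢
        rw [if_pos hω]
      exact tendsto_of_tendsto_of_tendsto_of_le_of_le hconc1 tendsto_const_nhds
        (fun N => measure_mono (hincl2 N)) (fun N => prob_le_one)
  · intro Qbar hQbarMeas hQbarEquiv hQbarT phat hphatMeas hphatMin ε hε
    obtain ⟨δ2, hδ2, hquant⟩ := inj_quant hQcomp hcg hp hε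
    have hδ23 : 0 < δ2/3 := by linarith
    obtain ⟨_, hB2⟩ := tendsto_event_prob P f hfm hδ23 hae0
    have hQbarSet : ∀ N, MeasurableSet {ω | Qbar N ω = Q} := fun N =>
      (hQbarMeas N) (MeasurableSet.of_discrete (s := {Q}))
    have hneq : Tendsto (fun N => P ({ω | Qbar N ω = Q}ᶜ)) atTop (nhds 0) := by
      have hco : ∀ N, P ({ω | Qbar N ω = Q}ᶜ) = 1 - P {ω | Qbar N ω = Q} := fun N => by
        rw [measure_compl (hQbarSet N) (measure_ne_top P _), measure_univ]
      have h := ENNReal.Tendsto.sub (tendsto_const_nhds (x := (1:ENNReal))) hQbarT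
        (Or.inl ENNReal.one_ne_top)
      simp only [tsub_self] at h
      simpa only [hco] using h
    have hbadincl : ∀ N, {ω | ε < eNorm (fun a => phat N ω a - p a)} ⊆
        {ω | Qbar N ω = Q}ᶜ ∪ {ω | δ2/3 ≤ f N ω} := by
      intro N ω hω
      by_contra hcon
      simp only [Set.mem_union, Set.mem_compl_iff, Set.mem_setOf_eq, not_or, not_not,
        not_le] at hcon
      obtain ⟨hQeq, hflt⟩ := hcon
      simp only [Set.mem_setOf_eq] at hω
      obtain ⟨hprob, hminp⟩ := hphatMin N ω
      have hm := hminp p hp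
      rw [hQeq] at hm
      have hflt' : eNorm (alphaVec (fun r => R r ω) N - Tmat c g Q *ᵥ p) < δ2/3 := hflt
      have hcomm : eNorm (Tmat c g Q *ᵥ p - alphaVec (fun r => R r ω) N)
          = eNorm (alphaVec (fun r => R r ω) N - Tmat c g Q *ᵥ p) := eNorm_sub_comm _ _
      have h2 := eNorm_sub_le (Tmat c g Q *ᵥ phat N ω) (alphaVec (fun r => R r ω) N)
        (Tmat c g Q *ᵥ p)
      have h3 := eNorm_sub_le (Tmat c g Q *ᵥ phat N ω) (alphaVec (fun r => R r ω) N)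
        (Tmat c g Q *ᵥ p)
      have h4 : eNorm (Tmat c g Q *ᵥ phat N ω - Tmat c g Q *ᵥ p) < δ2 := by
        have hm' : eNorm (Tmat c g Q *ᵥ phat N ω - alphaVec (fun r => R r ω) N)
            ≤ eNorm (Tmat c g Q *ᵥ p - alphaVec (fun r => R r ω) N) := hm
        linarith
      have h5 := hquant (phat N ω) hprob h4
      have h5' : eNorm (fun a => phat N ω a - p a) ≤ ε := h5
      exact absurd hω (not_lt.mpr h5')
    have hupper : Tendsto (fun N => P ({ω | Qbar N ω = Q}ᶜ) + P {ω | δ2/3 ≤ f N ω})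
        atTop (nhds 0) := by
      have := Filter.Tendsto.add hneq hB2
      simpa using this
    refine tendsto_of_tendsto_of_tendsto_of_le_of_le tendsto_const_nhds hupper
      (fun N => zero_le) (fun N => ?_)
    calc P {ω | ε < eNorm (fun a => phat N ω a - p a)}
        ≤ P ({ω | Qbar N ω = Q}ᶜ ∪ {ω | δ2/3 ≤ f N ω}) := measure_mono (hbadincl N)
      _ ≤ P ({ω | Qbar N ω = Q}ᶜ) + P {ω | δ2/3 ≤ f N ω} := measure_union_le _ _

end QMatrix
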